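/- Let X be a topological space in which every Λ-set is a G_δ-set, and suppose that for each pair of disjoint G_δ-sets G₀, G₁ there exist disjoint F_σ-sets F₀ ⊇ G₀ and F₁ ⊇ G₁. If f is lower semi-Baire-one, g is upper semi-Baire-one, and g ≤ f, then there exists a Baire-one function h on X with g ≤ h ≤ f. -/
import Mathlib


open Set

variable {X : Type*} [TopologicalSpace X]

/-- The kernel `A^Λ`: intersection of all open sets containing `A`. -/
def kernelSet (A : Set X) : Set X := ⋂₀ {O | IsOpen O ∧ A ⊆ O}

/-- The V-hull `A^V`: union of all closed sets contained in `A`. -/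
def vHull (A : Set X) : Set X := ⋃₀ {F | IsClosed F ∧ F ⊆ A}

/-- An F_σ set: a countable union of closed sets. -/
def IsFsigma (A : Set X) : Prop :=
  ∃ S : Set (Set X), S.Countable ∧ (∀ F ∈ S, IsClosed F) ∧ A = ⋃₀ S

lemma myFsigma_empty : IsFsigma (∅ : Set X) :=
  ⟨∅, countable_empty, by simp, by simp⟩

lemma myFsigma_compl {A : Set X} (h : IsGδ A) : IsFsigma Aᶜ := by
  obtain ⟨T, ho, hc, rfl⟩ := h
  rw [compl_sInter]
  exact ⟨compl '' T, hc.image _, by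
    rintro F ⟨u, hu, rfl⟩; exact (ho u hu).isClosed_compl, rfl⟩

lemma myGδ_compl {A : Set X} (h : IsFsigma A) : IsGδ Aᶜ := by
  obtain ⟨S, hc, hcl, rfl⟩ := h
  rw [compl_sUnion]
  exact ⟨compl '' S, by rintro F ⟨u, hu, rfl⟩; exact (hcl u hu).isOpen_compl,
    hc.image _, rfl⟩

lemma myGδ_of_compl {A : Set X} (h : IsFsigma Aᶜ) : IsGδ A :=
  compl_compl A ▸ myGδ_compl h

lemma myFsigma_of_compl {A : Set X} (h : IsGδ Aᶜ) : IsFsigma A :=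
  compl_compl A ▸ myFsigma_compl h

lemma myFsigma_iUnion {ι : Sort*} [Countable ι] {s : ι → Set X}
    (h : ∀ i, IsFsigma (s i)) : IsFsigma (⋃ i, s i) := by
  choose T hc hcl he using h
  refine ⟨⋃ i, T i, countable_iUnion hc, ?_, ?_⟩
  · intro F hF
    obtain ⟨i, hi⟩ := mem_iUnion.1 hF
    exact hcl i F hi
  · rw [sUnion_iUnion]
    exact iUnion_congr he

lemma myFsigma_inter {A B : Set X} (hA : IsFsigma A) (hB : IsFsigma B) :
    IsFsigma (A ∩ B) := by
  obtain ⟨S, hcS, hclS, rfl⟩ := hA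
  obtain ⟨T, hcT, hclT, rfl⟩ := hB
  refine ⟨image2 (· ∩ ·) S T, hcS.image2 hcT _, ?_, ?_⟩
  · rintro F ⟨s, hs, t, ht, rfl⟩
    exact (hclS s hs).inter (hclT t ht)
  · ext x
    simp only [mem_inter_iff, mem_sUnion, mem_image2]
    constructor
    · rintro ⟨⟨s, hs, hxs⟩, ⟨t, ht, hxt⟩⟩
      exact ⟨s ∩ t, ⟨s, hs, t, ht, rfl⟩, hxs, hxt⟩
    · rintro ⟨F, ⟨s, hs, t, ht, rfl⟩, hx⟩
      exact ⟨⟨s, hs, hx.1⟩, ⟨t, ht, hx.2⟩⟩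

/-- Core consequence of `hΛ`: a set all of whose points lie in closed subsets
of it (i.e. a union of closed sets) is F_σ. -/
lemma myFsigma_of_pointwise_closed
    (hΛ : ∀ A : Set X, A = kernelSet A → IsGδ A) {T : Set X}
    (h : ∀ x ∈ T, ∃ C : Set X, IsClosed C ∧ x ∈ C ∧ C ⊆ T) : IsFsigma T := by
  have hk : Tᶜ = kernelSet Tᶜ := by
    refine Subset.antisymm (fun x hx => mem_sInter.2 fun O hO => hO.2 hx) ?_
    intro y hy
    by_contra hyT
    have hyT' : y ∈ T := not_not.1 hyT
    obtain ⟨C, hCc, hyC, hCT⟩ := h y hyT'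
    have : y ∈ Cᶜ := mem_sInter.1 hy Cᶜ ⟨hCc.isOpen_compl, compl_subset_compl.2 hCT⟩
    exact this hyC
  exact myFsigma_of_compl (hΛ _ hk)

lemma myFsigma_iInter (hΛ : ∀ A : Set X, A = kernelSet A → IsGδ A)
    {ι : Sort*} {s : ι → Set X} (h : ∀ i, IsFsigma (s i)) :
    IsFsigma (⋂ i, s i) := by
  apply myFsigma_of_pointwise_closed hΛ
  intro x hx
  have hx' : ∀ i, ∃ C : Set X, IsClosed C ∧ x ∈ C ∧ C ⊆ s i := by
    intro i
    obtain ⟨S, hc, hcl, he⟩ := h i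
    have hxi : x ∈ ⋃₀ S := he ▸ mem_iInter.1 hx i
    obtain ⟨C, hC, hxC⟩ := hxi
    exact ⟨C, hcl C hC, hxC, he ▸ subset_sUnion_of_mem hC⟩
  choose C hcl hxC hsub using hx'
  exact ⟨⋂ i, C i, isClosed_iInter hcl, mem_iInter.2 hxC, iInter_mono hsub⟩

lemma myGδ_iUnion (hΛ : ∀ A : Set X, A = kernelSet A → IsGδ A)
    {ι : Sort*} {s : ι → Set X} (h : ∀ i, IsGδ (s i)) : IsGδ (⋃ i, s i) := by
  apply myGδ_of_compl
  rw [compl_iUnion]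
  exact myFsigma_iInter hΛ fun i => myFsigma_compl (h i)

/-- The `n`-th rational in a fixed enumeration. -/
noncomputable def rq (n : ℕ) : ℚ := (Denumerable.eqv ℚ).symm n

/-- Its real value. -/
noncomputable def rr (n : ℕ) : ℝ := (rq n : ℝ)

def Lset (f : X → ℝ) (n : ℕ) (p : ℕ → Set X × Set X) : Set X :=
  {x | f x < rr n} ∪ ⋃ m, ⋃ (_ : m < n ∧ rr m < rr n), (p m).2

def Uset (g : X → ℝ) (n : ℕ) (p : ℕ → Set X × Set X) : Set X :=
  {x | g x ≤ rr n} ∩ ⋂ m, ⋂ (_ : m < n ∧ rr n < rr m), (p m).1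

def InvAt (f g : X → ℝ) (n : ℕ) (p : ℕ → Set X × Set X) : Prop :=
  IsFsigma (p n).1 ∧ IsFsigma ((p n).2)ᶜ ∧ (p n).1 ⊆ (p n).2 ∧
    Lset f n p ⊆ (p n).1 ∧ (p n).2 ⊆ Uset g n p

def StepP (f g : X → ℝ) (n : ℕ) (p : ℕ → Set X × Set X)
    (pq : Set X × Set X) : Prop :=
  IsFsigma pq.1 ∧ IsFsigma pq.2ᶜ ∧ pq.1 ⊆ pq.2 ∧
    ((∀ m < n, InvAt f g m p) → Lset f n p ⊆ pq.1 ∧ pq.2 ⊆ Uset g n p)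

lemma Lset_congr {f : X → ℝ} {n : ℕ} {p p' : ℕ → Set X × Set X}
    (hp : ∀ m < n, p m = p' m) : Lset f n p = Lset f n p' := by
  unfold Lset
  congr 1
  exact iUnion_congr fun m => iUnion_congr fun hm => by rw [hp m hm.1]

lemma Uset_congr {g : X → ℝ} {n : ℕ} {p p' : ℕ → Set X × Set X}
    (hp : ∀ m < n, p m = p' m) : Uset g n p = Uset g n p' := by
  unfold Uset
  congr 1
  exact iInter_congr fun m => iInter_congr fun hm => by rw [hp m hm.1]

lemma InvAt_congr {f g : X → ℝ} {m n : ℕ} {p p' : ℕ → Set X × Set X}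
    (hm : m < n) (hp : ∀ k < n, p k = p' k) :
    InvAt f g m p ↔ InvAt f g m p' := by
  unfold InvAt
  rw [hp m hm, Lset_congr (fun k hk => hp k (hk.trans hm)),
    Uset_congr (fun k hk => hp k (hk.trans hm))]

lemma step_exists
    (hΛ : ∀ A : Set X, A = kernelSet A → IsGδ A)
    (hsep : ∀ G₀ G₁ : Set X, IsGδ G₀ → IsGδ G₁ → Disjoint G₀ G₁ →
      ∃ F₀ F₁ : Set X, IsFsigma F₀ ∧ IsFsigma F₁ ∧ G₀ ⊆ F₀ ∧ G₁ ⊆ F₁ ∧ Disjoint F₀ F₁)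
    (f g : X → ℝ)
    (hf : ∀ t : ℝ, IsFsigma (f ⁻¹' Set.Ioi t))
    (hg : ∀ t : ℝ, IsFsigma (g ⁻¹' Set.Iio t))
    (hgf : g ≤ f) (n : ℕ) (p : ℕ → Set X × Set X) :
    ∃ pq : Set X × Set X, StepP f g n p pq := by
  by_cases hcom : ∀ m < n, InvAt f g m p
  · -- the Lset is Gδ
    have hfle : ∀ q : ℚ, IsGδ {x : X | f x ≤ (q : ℝ)} := by
      intro q
      have : {x : X | f x ≤ (q : ℝ)} = (f ⁻¹' Set.Ioi (q : ℝ))ᶜ := by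
        ext x; simp [not_lt]
      rw [this]
      exact myGδ_compl (hf q)
    have hgge : ∀ q : ℚ, IsGδ {x : X | (q : ℝ) ≤ g x} := by
      intro q
      have : {x : X | (q : ℝ) ≤ g x} = (g ⁻¹' Set.Iio (q : ℝ))ᶜ := by
        ext x; simp [not_lt]
      rw [this]
      exact myGδ_compl (hg q)
    have hLg : IsGδ (Lset f n p) := by
      unfold Lset
      apply IsGδ.union
      · have he : {x : X | f x < rr n} =
            ⋃ (q : ℚ), ⋃ (_ : (q : ℝ) < rr n), {x : X | f x ≤ (q : ℝ)} := by
          ext x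
          simp only [mem_setOf_eq, mem_iUnion]
          constructor
          · intro hx
            obtain ⟨q, hq1, hq2⟩ := exists_rat_btwn hx
            exact ⟨q, hq2, le_of_lt hq1⟩
          · rintro ⟨q, hq, hxq⟩
            exact lt_of_le_of_lt hxq hq
        rw [he]
        exact myGδ_iUnion hΛ fun q => myGδ_iUnion hΛ fun _ => hfle q
      · exact myGδ_iUnion hΛ fun m => myGδ_iUnion hΛ fun hm =>
          myGδ_of_compl (hcom m hm.1).2.1
    have hUc : IsGδ (Uset g n p)ᶜ := by
      unfold Uset
      rw [compl_inter, compl_iInter]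
      apply IsGδ.union
      · have he : {x : X | g x ≤ rr n}ᶜ =
            ⋃ (q : ℚ), ⋃ (_ : rr n < (q : ℝ)), {x : X | (q : ℝ) ≤ g x} := by
          ext x
          simp only [mem_compl_iff, mem_setOf_eq, not_le, mem_iUnion]
          constructor
          · intro hx
            obtain ⟨q, hq1, hq2⟩ := exists_rat_btwn hx
            exact ⟨q, hq1, le_of_lt hq2⟩
          · rintro ⟨q, hq, hxq⟩
            exact lt_of_lt_of_le hq hxq
        rw [he]
        exact myGδ_iUnion hΛ fun q => myGδ_iUnion hΛ fun _ => hgge q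
      · refine myGδ_iUnion hΛ fun m => ?_
        rw [compl_iInter]
        exact myGδ_iUnion hΛ fun hm => myGδ_compl (hcom m hm.1).1
    have hLU : Lset f n p ⊆ Uset g n p := by
      intro x hx
      rcases hx with hx1 | hx2
      · refine ⟨le_of_lt (lt_of_le_of_lt (hgf x) hx1), ?_⟩
        refine mem_iInter.2 fun m => mem_iInter.2 fun hm => ?_
        exact (hcom m hm.1).2.2.2.1 (Or.inl (lt_trans hx1 hm.2))
      · obtain ⟨k, hk⟩ := mem_iUnion.1 hx2
        obtain ⟨hkc, hxk⟩ := mem_iUnion.1 hk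
        have hU := (hcom k hkc.1).2.2.2.2 hxk
        refine ⟨le_trans hU.1 (le_of_lt hkc.2), ?_⟩
        refine mem_iInter.2 fun m => mem_iInter.2 fun hm => ?_
        rcases lt_trichotomy k m with hkm | hkm | hkm
        · exact (hcom m hm.1).2.2.2.1
            (Or.inr (mem_iUnion.2 ⟨k, mem_iUnion.2
              ⟨⟨hkm, lt_trans hkc.2 hm.2⟩, hxk⟩⟩))
        · exact absurd (lt_trans hkc.2 hm.2) (by rw [hkm]; exact lt_irrefl _)
        · exact mem_iInter.1 (mem_iInter.1 hU.2 m) ⟨hkm, lt_trans hkc.2 hm.2⟩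
    have hdis : Disjoint (Lset f n p) (Uset g n p)ᶜ :=
      Set.disjoint_left.2 fun x hx hx' => hx' (hLU hx)
    obtain ⟨F₀, F₁, h0, h1, hs0, hs1, hd⟩ := hsep _ _ hLg hUc hdis
    refine ⟨(F₀, F₁ᶜ), h0, by simpa using h1, ?_, fun _ => ⟨hs0, ?_⟩⟩
    · exact fun x hx => Set.disjoint_left.1 hd hx
    · intro x hx
      by_contra hxU
      exact hx (hs1 hxU)
  · refine ⟨(∅, univ), myFsigma_empty, ?_, empty_subset _, fun h => absurd h hcom⟩
    rw [compl_univ]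
    exact myFsigma_empty

noncomputable def seqOf {α : Type*} (d : α) (S : ℕ → (ℕ → α) → α → Prop)
    (hex : ∀ n p, ∃ a, S n p a) : ℕ → α
  | n => Classical.choose (hex n (fun m => if h : m < n then seqOf d S hex m else d))
termination_by n => n
decreasing_by all_goals assumption

lemma seqOf_spec {α : Type*} (d : α) (S : ℕ → (ℕ → α) → α → Prop)
    (hex : ∀ n p, ∃ a, S n p a) (n : ℕ) :
    S n (fun m => if h : m < n then seqOf d S hex m else d) (seqOf d S hex n) := by
  have h : seqOf d S hex n =
      Classical.choose (hex n (fun m => if h : m < n then seqOf d S hex m else d)) := by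
    rw [seqOf]
  rw [h]
  exact Classical.choose_spec _

theorem insertion_baireOne_of_Gdelta_separation
    (hΛ : ∀ A : Set X, A = kernelSet A → IsGδ A)
    (hsep : ∀ G₀ G₁ : Set X, IsGδ G₀ → IsGδ G₁ → Disjoint G₀ G₁ →
      ∃ F₀ F₁ : Set X, IsFsigma F₀ ∧ IsFsigma F₁ ∧ G₀ ⊆ F₀ ∧ G₁ ⊆ F₁ ∧ Disjoint F₀ F₁)
    (f g : X → ℝ)
    (hf : ∀ t : ℝ, IsFsigma (f ⁻¹' Set.Ioi t))
    (hg : ∀ t : ℝ, IsFsigma (g ⁻¹' Set.Iio t))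
    (hgf : g ≤ f) :
    ∃ h : X → ℝ, (∀ U : Set ℝ, IsOpen U → IsFsigma (h ⁻¹' U)) ∧ g ≤ h ∧ h ≤ f := by
  classical
  set F : ℕ → Set X × Set X :=
    seqOf (∅, univ) (StepP f g) (step_exists hΛ hsep f g hf hg hgf) with hF
  have hspec : ∀ n, StepP f g n
      (fun m => if h : m < n then F m else (∅, univ)) (F n) :=
    fun n => seqOf_spec _ _ _ n
  have hInv : ∀ n, InvAt f g n F := by
    intro n
    induction n using Nat.strong_induction_on with
    | _ n ih =>
      have hsp := hspec n
      set p : ℕ → Set X × Set X := fun m => if h : m < n then F m else (∅, univ) with hpdef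
      have hagree : ∀ m < n, p m = F m := fun m hm => dif_pos hm
      have hcom : ∀ m < n, InvAt f g m p :=
        fun m hm => (InvAt_congr hm hagree).2 (ih m hm)
      obtain ⟨h1, h2, h3, h4⟩ := hsp
      obtain ⟨hL, hU⟩ := h4 hcom
      exact ⟨h1, h2, h3, by rwa [Lset_congr hagree] at hL,
        by rwa [Uset_congr hagree] at hU⟩
  set e : ℚ ≃ ℕ := Denumerable.eqv ℚ with he
  have hre : ∀ q : ℚ, rr (e q) = (q : ℝ) := by
    intro q
    unfold rr rq
    rw [← he, Equiv.symm_apply_apply]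
  set P : ℚ → Set X := fun q => (F (e q)).1 with hP
  set Q : ℚ → Set X := fun q => (F (e q)).2 with hQ
  have hPf : ∀ q, IsFsigma (P q) := fun q => (hInv (e q)).1
  have hQc : ∀ q, IsFsigma (Q q)ᶜ := fun q => (hInv (e q)).2.1
  have hPQ : ∀ q, P q ⊆ Q q := fun q => (hInv (e q)).2.2.1
  have hfP : ∀ (q : ℚ) x, f x < (q : ℝ) → x ∈ P q := by
    intro q x hx
    exact (hInv (e q)).2.2.2.1 (Or.inl (by rw [hre q]; exact hx))
  have hQg : ∀ (q : ℚ) x, x ∈ Q q → g x ≤ (q : ℝ) := by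
    intro q x hx
    have := ((hInv (e q)).2.2.2.2 hx).1
    rwa [hre q] at this
  have hQP : ∀ s q : ℚ, s < q → Q s ⊆ P q := by
    intro s q hsq x hx
    have hrr : rr (e s) < rr (e q) := by
      rw [hre s, hre q]; exact_mod_cast hsq
    rcases lt_trichotomy (e s) (e q) with h | h | h
    · exact (hInv (e q)).2.2.2.1
        (Or.inr (mem_iUnion.2 ⟨e s, mem_iUnion.2 ⟨⟨h, hrr⟩, hx⟩⟩))
    · exact absurd (e.injective h) (by intro hh; rw [hh] at hsq; exact lt_irrefl _ hsq)
    · have hU := ((hInv (e s)).2.2.2.2 hx).2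
      exact mem_iInter.1 (mem_iInter.1 hU (e q)) ⟨h, hrr⟩
  -- define h
  set h : X → ℝ := fun x => sInf ((fun q : ℚ => (q : ℝ)) '' {q | x ∈ P q}) with hh
  have hne : ∀ x, ((fun q : ℚ => (q : ℝ)) '' {q | x ∈ P q}).Nonempty := by
    intro x
    obtain ⟨q, hq⟩ := exists_rat_gt (f x)
    exact ⟨(q : ℝ), ⟨q, hfP q x hq, rfl⟩⟩
  have hbdd : ∀ x, ∀ t ∈ (fun q : ℚ => (q : ℝ)) '' {q | x ∈ P q}, g x ≤ t := by
    rintro x t ⟨q, hq, rfl⟩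
    exact hQg q x (hPQ q hq)
  have hbddb : ∀ x, BddBelow ((fun q : ℚ => (q : ℝ)) '' {q | x ∈ P q}) :=
    fun x => ⟨g x, fun t ht => hbdd x t ht⟩
  have hgh : g ≤ h := fun x => le_csInf (hne x) (hbdd x)
  have hhq : ∀ x (q : ℚ), x ∈ P q → h x ≤ (q : ℝ) :=
    fun x q hq => csInf_le (hbddb x) ⟨q, hq, rfl⟩
  have hqh : ∀ x (q : ℚ), x ∉ Q q → (q : ℝ) ≤ h x := by
    intro x q hq
    refine le_csInf (hne x) ?_
    rintro t ⟨q', hq', rfl⟩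
    by_contra hlt
    push_neg at hlt
    have hq'q : q' < q := by exact_mod_cast hlt
    exact hq (hPQ q (hQP q' q hq'q (hPQ q' hq')))
  have hhf : h ≤ f := by
    intro x
    by_contra hlt
    push_neg at hlt
    obtain ⟨q, h1, h2⟩ := exists_rat_btwn hlt
    exact absurd (hhq x q (hfP q x h1)) (not_le.2 h2)
  have hlt_set : ∀ t : ℝ, h ⁻¹' Iio t = ⋃ (q : ℚ), ⋃ (_ : (q : ℝ) < t), P q := by
    intro t
    ext x
    simp only [mem_preimage, mem_Iio, mem_iUnion]
    constructor
    · intro hx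
      obtain ⟨y, hy, hyt⟩ := exists_lt_of_csInf_lt (hne x) hx
      obtain ⟨q, hq, rfl⟩ := hy
      exact ⟨q, hyt, hq⟩
    · rintro ⟨q, hqt, hq⟩
      exact lt_of_le_of_lt (hhq x q hq) hqt
  have hgt_set : ∀ t : ℝ, h ⁻¹' Ioi t = ⋃ (q : ℚ), ⋃ (_ : t < (q : ℝ)), (Q q)ᶜ := by
    intro t
    ext x
    simp only [mem_preimage, mem_Ioi, mem_iUnion, mem_compl_iff]
    constructor
    · intro hx
      obtain ⟨q, hq1, hq2⟩ := exists_rat_btwn hx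
      obtain ⟨q', hq1', hq2'⟩ := exists_rat_btwn hq1
      have hq'q : q' < q := by exact_mod_cast hq2'
      have hxq' : x ∉ Q q' := by
        intro hxQ
        exact absurd (hhq x q (hQP q' q hq'q hxQ)) (not_le.2 hq2)
      exact ⟨q', hq1', hxq'⟩
    · rintro ⟨q, hqt, hq⟩
      exact lt_of_lt_of_le hqt (hqh x q hq)
  refine ⟨h, ?_, hgh, hhf⟩
  intro U hU
  have hdecomp : h ⁻¹' U = ⋃ (p : ℚ × ℚ),
      ⋃ (_ : Ioo ((p.1 : ℝ)) ((p.2 : ℝ)) ⊆ U),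
        (h ⁻¹' Ioi ((p.1 : ℝ)) ∩ h ⁻¹' Iio ((p.2 : ℝ))) := by
    ext x
    simp only [mem_preimage, mem_iUnion, mem_inter_iff, mem_Ioi, mem_Iio]
    constructor
    · intro hx
      obtain ⟨ε, hε, hball⟩ := Metric.isOpen_iff.1 hU (h x) hx
      have hIoo : Ioo (h x - ε) (h x + ε) ⊆ U := by
        rw [← Real.ball_eq_Ioo]; exact hball
      obtain ⟨a, ha1, ha2⟩ := exists_rat_btwn (show h x - ε < h x by linarith)
      obtain ⟨b, hb1, hb2⟩ := exists_rat_btwn (show h x < h x + ε by linarith)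
      refine ⟨(a, b), ?_, ha2, hb1⟩
      intro y hy
      exact hIoo ⟨lt_trans ha1 hy.1, lt_trans hy.2 hb2⟩
    · rintro ⟨⟨a, b⟩, hsub, h1, h2⟩
      exact hsub ⟨h1, h2⟩
  rw [hdecomp]
  refine myFsigma_iUnion fun p => myFsigma_iUnion fun _ => myFsigma_inter ?_ ?_
  · rw [hgt_set]
    exact myFsigma_iUnion fun q => myFsigma_iUnion fun _ => hQc q
  · rw [hlt_set]
    exact myFsigma_iUnion fun q => myFsigma_iUnion fun _ => hPf q
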